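/- Suppose G is a connected graph with n > 1 vertices and let M = M[IAS(G)]. Then the following are equivalent: (1) M is not 3-connected, i.e. τ(M) ≤ 2; (2) M is not cyclically 3-connected, i.e. κ*(M) ≤ 2; (3) M has a circuit of size 2; (4) G has a pendant vertex or a pair of twin vertices. -/

import Mathlib

open scoped ENat

variable {V : Type*} [Fintype V] [DecidableEq V]

/-- The column of the matrix `IAS(G) = (I | A | A+I)` indexed by `(v, i)`:
`i = 0` gives `φ(v)` (identity column), `i = 1` gives `χ(v)` (column of `A`),
`i = 2` gives `ψ(v)` (column of `A + I`). -/
def iasCol (A : Matrix V V (ZMod 2)) : V × Fin 3 → V → ZMod 2 :=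
  fun p w =>
    if p.2 = 0 then (if w = p.1 then 1 else 0)
    else if p.2 = 1 then A w p.1
    else A w p.1 + (if w = p.1 then 1 else 0)

/-- The rank of a subset of the ground set `W(G) = V × Fin 3` of the isotropic
matroid: the GF(2)-rank of the corresponding set of columns. -/
noncomputable def iasRank (A : Matrix V V (ZMod 2)) (S : Set (V × Fin 3)) : ℕ :=
  Module.finrank (ZMod 2) (Submodule.span (ZMod 2) (iasCol A '' S))

/-- The connectivity function `λ(S) = r(S) + r(W - S) - r(M)`. -/
noncomputable def iasLambda (A : Matrix V V (ZMod 2)) (S : Set (V × Fin 3)) : ℕ :=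
  iasRank A S + iasRank A Sᶜ - iasRank A Set.univ

/-- Independence in the isotropic matroid. -/
def iasIndep (A : Matrix V V (ZMod 2)) (S : Set (V × Fin 3)) : Prop :=
  LinearIndependent (ZMod 2) (fun s : S => iasCol A s.1)

/-- Circuits of the isotropic matroid: minimal dependent sets. -/
def iasCircuit (A : Matrix V V (ZMod 2)) (C : Set (V × Fin 3)) : Prop :=
  ¬ iasIndep A C ∧ ∀ S ⊂ C, iasIndep A S

/-- An ordinary `k`-separation: `λ(S) < k` and `|S|, |W - S| ≥ k`. -/
def OrdinarySep (A : Matrix V V (ZMod 2)) (k : ℕ) (S : Set (V × Fin 3)) : Prop :=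
  0 < k ∧ iasLambda A S < k ∧ k ≤ S.ncard ∧ k ≤ Sᶜ.ncard

/-- A cyclic `k`-separation: `λ(S) < k` and both `S` and `W - S` are dependent. -/
def CyclicSep (A : Matrix V V (ZMod 2)) (k : ℕ) (S : Set (V × Fin 3)) : Prop :=
  0 < k ∧ iasLambda A S < k ∧ ¬ iasIndep A S ∧ ¬ iasIndep A Sᶜ

/-- A vertical `k`-separation: `λ(S) < k` and `r(S), r(W - S) ≥ k`. -/
def VerticalSep (A : Matrix V V (ZMod 2)) (k : ℕ) (S : Set (V × Fin 3)) : Prop :=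
  0 < k ∧ iasLambda A S < k ∧ k ≤ iasRank A S ∧ k ≤ iasRank A Sᶜ

/-- `τ(M) = min {k : M has an ordinary k-separation}`, with `min ∅ = ∞`. -/
noncomputable def iasTau (A : Matrix V V (ZMod 2)) : ℕ∞ :=
  sInf {k : ℕ∞ | ∃ m : ℕ, (m : ℕ∞) = k ∧ ∃ S, OrdinarySep A m S}

/-- `κ*(M) = min ({k : M has a cyclic k-separation} ∪ {|W| - r(M)})`. -/
noncomputable def iasKappaStar (A : Matrix V V (ZMod 2)) : ℕ :=
  sInf ({k : ℕ | ∃ S, CyclicSep A k S} ∪ {3 * Fintype.card V - iasRank A Set.univ})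

/-- `κ(M) = min ({k : M has a vertical k-separation} ∪ {r(M)})`. -/
noncomputable def iasKappa (A : Matrix V V (ZMod 2)) : ℕ :=
  sInf ({k : ℕ | ∃ S, VerticalSep A k S} ∪ {iasRank A Set.univ})

/-- The simple graph underlying a looped simple graph given by its adjacency matrix. -/
def toSimpleGraph (A : Matrix V V (ZMod 2)) : SimpleGraph V where
  Adj v w := v ≠ w ∧ A v w = 1 ∧ A w v = 1
  symm := ⟨fun v w ⟨h1, h2, h3⟩ => ⟨Ne.symm h1, h3, h2⟩⟩
  loopless := ⟨fun v h => h.1 rfl⟩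

/-- The open neighborhood `N_G(v)`. -/
def nbhd (A : Matrix V V (ZMod 2)) (v : V) : Set V := {u | u ≠ v ∧ A v u = 1}

/-- `v` is a pendant vertex: `N_G(v) = {w}` for some `w`. -/
def IsPendant (A : Matrix V V (ZMod 2)) (v : V) : Prop := ∃ w, nbhd A v = {w}

/-- `G` has a pair of twin vertices: `v ≠ w` with `N_G(v) - {w} = N_G(w) - {v}`. -/
def HasTwins (A : Matrix V V (ZMod 2)) : Prop :=
  ∃ v w, v ≠ w ∧ nbhd A v \ {w} = nbhd A w \ {v}

/-- The cut-rank `c_G(X)`: the GF(2)-rank of the submatrix `A[V - X, X]`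
(columns indexed by `X`, rows indexed by `V - X`). -/
noncomputable def cutRank (A : Matrix V V (ZMod 2)) (X : Set V) : ℕ :=
  Module.finrank (ZMod 2)
    (Submodule.span (ZMod 2) ((fun x : V => fun w : ↥(Xᶜ) => A w.1 x) '' X))

/-- `τ_G(X) = ⋃_{x ∈ X} τ_G(x)`, the union of the vertex triples of members of `X`. -/
def tauSet (X : Set V) : Set (V × Fin 3) := {p | p.1 ∈ X}

/-- Loop complementation at `v`. -/
def loopComp (A : Matrix V V (ZMod 2)) (v : V) : Matrix V V (ZMod 2) :=
  fun x y => A x y + if x = v ∧ y = v then 1 else 0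

/-- Simple local complementation at `v`. -/
def simpleLocalComp (A : Matrix V V (ZMod 2)) (v : V) : Matrix V V (ZMod 2) :=
  fun x y => A x y +
    if x ≠ y ∧ (x ≠ v ∧ A v x = 1) ∧ (y ≠ v ∧ A v y = 1) then 1 else 0

/-- Non-simple local complementation at `v`. -/
def nonSimpleLocalComp (A : Matrix V V (ZMod 2)) (v : V) : Matrix V V (ZMod 2) :=
  fun x y => simpleLocalComp A v x y + if x = y ∧ x ≠ v ∧ A v x = 1 then 1 else 0

/-- One local move. -/
def LocalStep (A B : Matrix V V (ZMod 2)) : Prop :=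
  ∃ v, B = loopComp A v ∨ B = simpleLocalComp A v ∨ B = nonSimpleLocalComp A v

/-- Local equivalence: a finite sequence of loop complementations and
(simple or non-simple) local complementations. -/
def LocallyEquiv (A B : Matrix V V (ZMod 2)) : Prop :=
  Relation.ReflTransGen LocalStep A B

/-- `G` has a split: a bipartition `(V₁, V₂)` of `V` with `|V₁|, |V₂| ≥ 2` such that the
GF(2)-rank of `A[V₁, V₂]` is at most 1. -/
def HasSplit (A : Matrix V V (ZMod 2)) : Prop :=
  ∃ X : Set V, 2 ≤ X.ncard ∧ 2 ≤ Xᶜ.ncard ∧ cutRank A X ≤ 1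

/-- A transverse circuit: a circuit of the isotropic matroid meeting each
vertex triple at most once. -/
def IsTransverseCircuit (A : Matrix V V (ZMod 2)) (C : Set (V × Fin 3)) : Prop :=
  iasCircuit A C ∧ ∀ p ∈ C, ∀ q ∈ C, p.1 = q.1 → p = q

/-- An isotropic `k`-separation of `G`: `|X|, |V - X| ≥ k` and `c_G(X) < k`. -/
def IsotropicSep (A : Matrix V V (ZMod 2)) (k : ℕ) (X : Set V) : Prop :=
  k ≤ X.ncard ∧ k ≤ Xᶜ.ncard ∧ cutRank A X < k

/-- The isotropic connectivity `κ_B(G)`, with `min ∅ = ∞`. -/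
noncomputable def kappaB (A : Matrix V V (ZMod 2)) : ℕ∞ :=
  sInf {j : ℕ∞ | ∃ k : ℕ, (k : ℕ∞) = j ∧ ∃ X, IsotropicSep A k X}

/-- The 5-cycle `C₅`. -/
def C5mat : Matrix (Fin 5) (Fin 5) (ZMod 2) :=
  fun i j => if (i.val + 1) % 5 = j.val ∨ (j.val + 1) % 5 = i.val then 1 else 0

/-- The wheel `W₅` : a 5-cycle on `{0,…,4}` plus a hub `5` adjacent to all. -/
def W5mat : Matrix (Fin 6) (Fin 6) (ZMod 2) :=
  fun i j =>
    if (i.val = 5 ∧ j.val ≠ 5) ∨ (j.val = 5 ∧ i.val ≠ 5) then 1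
    else if i.val ≠ 5 ∧ j.val ≠ 5 ∧ ((i.val + 1) % 5 = j.val ∨ (j.val + 1) % 5 = i.val) then 1
    else 0
set_option linter.unusedSectionVars false
set_option maxHeartbeats 1000000

section StmtAux

variable {V : Type*} [Fintype V] [DecidableEq V]

private lemma zmod2_cases (x : ZMod 2) : x = 0 ∨ x = 1 := by revert x; decide

private lemma zpi_add_self (x : V → ZMod 2) : x + x = 0 := by
  funext w
  show x w + x w = 0
  rcases zmod2_cases (x w) with h | h <;> rw [h] <;> decide

private lemma col_add (A : Matrix V V (ZMod 2)) (v : V) {a b d : Fin 3}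
    (h1 : a ≠ b) (h2 : a ≠ d) (h3 : b ≠ d) :
    iasCol A (v, a) + iasCol A (v, b) = iasCol A (v, d) := by
  funext w
  show iasCol A (v, a) w + iasCol A (v, b) w = iasCol A (v, d) w
  fin_cases a <;> fin_cases b <;> fin_cases d <;>
    simp_all [iasCol] <;>
    rcases zmod2_cases (A w v) with h | h <;>
    rcases zmod2_cases ((if w = v then (1:ZMod 2) else 0)) with h' | h' <;>
    rw [h, h'] <;> decide

private lemma col_apply0 (A : Matrix V V (ZMod 2)) (v w : V) :
    iasCol A (v, 0) w = if w = v then 1 else 0 := rfl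

private lemma col_apply1 (A : Matrix V V (ZMod 2)) (v w : V) :
    iasCol A (v, 1) w = A w v := rfl

private lemma col_apply2 (A : Matrix V V (ZMod 2)) (v w : V) :
    iasCol A (v, 2) w = A w v + if w = v then 1 else 0 := rfl

private lemma fin3_ne0 : ∀ j : Fin 3, j ≠ 0 → j = 1 ∨ j = 2 := by decide

private lemma fin3_cases : ∀ j : Fin 3, j = 0 ∨ j = 1 ∨ j = 2 := by decide

private def eV (v : V) : V → ZMod 2 := fun w => if w = v then 1 else 0

private lemma col0_eV (A : Matrix V V (ZMod 2)) (v : V) : iasCol A (v, 0) = eV v := rfl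

private lemma span_top_of_e (P : Submodule (ZMod 2) (V → ZMod 2))
    (h : ∀ v, eV v ∈ P) : P = ⊤ := by
  rw [eq_top_iff, ← (Pi.basisFun (ZMod 2) V).span_eq, Submodule.span_le]
  rintro x ⟨v, rfl⟩
  have hbe : (Pi.basisFun (ZMod 2) V) v = eV v := by
    funext w
    simp [eV, Pi.basisFun_apply, Pi.single_apply]
  rw [hbe]
  exact h v

private lemma finrank_lb (P : Submodule (ZMod 2) (V → ZMod 2)) (T : Set V)
    (hT : ∀ t ∈ T, eV t ∈ P)
    (f : V → ZMod 2) (hf : f ∈ P) (u : V) (hu : u ∉ T) (hfu : f u ≠ 0) :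
    T.ncard + 1 ≤ Module.finrank (ZMod 2) P := by
  classical
  let F : T ⊕ Unit → V → ZMod 2 := Sum.elim (fun t => eV t.1) (fun _ => f)
  have hind : LinearIndependent (ZMod 2) F := by
    rw [Fintype.linearIndependent_iff]
    intro g hg
    have hsum : ∀ w, (∑ i, g i * F i w) = 0 := by
      intro w
      have happ : (∑ i, g i • F i) w = 0 := by rw [hg]; rfl
      rwa [Finset.sum_apply] at happ
    have hgu : g (Sum.inr ()) = 0 := by
      have h2 := hsum u
      rw [Fintype.sum_sum_type] at h2
      have hz : ∀ t : T, g (Sum.inl t) * F (Sum.inl t) u = 0 := by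
        intro t
        have : u ≠ t.1 := fun h => hu (h ▸ t.2)
        simp [F, eV, this]
      rw [Finset.sum_congr rfl (fun t _ => hz t)] at h2
      simp [F] at h2
      rcases h2 with h | h
      · exact h
      · exact absurd h hfu
    intro i
    match i with
    | Sum.inr () => exact hgu
    | Sum.inl t0 =>
      have h2 := hsum t0.1
      rw [Fintype.sum_sum_type] at h2
      have hone : ∑ t : T, g (Sum.inl t) * F (Sum.inl t) t0.1 = g (Sum.inl t0) := by
        rw [Finset.sum_eq_single_of_mem t0 (Finset.mem_univ _)]
        · simp [F, eV]
        · intro t _ hne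
          have : t0.1 ≠ t.1 := fun h => hne (Subtype.ext h.symm)
          simp [F, eV, this]
      rw [hone] at h2
      simpa [F, hgu] using h2
  have hle : Submodule.span (ZMod 2) (Set.range F) ≤ P := by
    rw [Submodule.span_le]
    rintro x ⟨i, rfl⟩
    match i with
    | Sum.inl t => exact hT t.1 t.2
    | Sum.inr () => exact hf
  have hcard := finrank_span_eq_card hind
  have := Submodule.finrank_mono hle
  rw [hcard] at this
  simpa [Set.ncard_eq_toFinset_card', Set.toFinset_card] using this

private lemma span_image_univ_top (A : Matrix V V (ZMod 2)) :
    Submodule.span (ZMod 2) (iasCol A '' Set.univ) = ⊤ :=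
  span_top_of_e _ (fun v => Submodule.subset_span ⟨(v, 0), trivial, col0_eV A v⟩)

private lemma rank_univ (A : Matrix V V (ZMod 2)) :
    iasRank A Set.univ = Fintype.card V := by
  rw [iasRank, span_image_univ_top, finrank_top, Module.finrank_fintype_fun_eq_card]

private lemma rank_sum_eq (A : Matrix V V (ZMod 2)) (S : Set (V × Fin 3)) :
    iasRank A S + iasRank A Sᶜ = Fintype.card V +
      Module.finrank (ZMod 2)
        ((Submodule.span (ZMod 2) (iasCol A '' S)) ⊓
          (Submodule.span (ZMod 2) (iasCol A '' Sᶜ)) : Submodule (ZMod 2) (V → ZMod 2)) := by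
  have hsup : (Submodule.span (ZMod 2) (iasCol A '' S)) ⊔
      (Submodule.span (ZMod 2) (iasCol A '' Sᶜ)) = ⊤ := by
    rw [← Submodule.span_union, ← Set.image_union, Set.union_compl_self,
      span_image_univ_top]
  have h := Submodule.finrank_sup_add_finrank_inf_eq
    (Submodule.span (ZMod 2) (iasCol A '' S)) (Submodule.span (ZMod 2) (iasCol A '' Sᶜ))
  rw [hsup, finrank_top, Module.finrank_fintype_fun_eq_card] at h
  rw [iasRank, iasRank, ← h]

private lemma lambda_eq (A : Matrix V V (ZMod 2)) (S : Set (V × Fin 3)) :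
    iasLambda A S = Module.finrank (ZMod 2)
        ((Submodule.span (ZMod 2) (iasCol A '' S)) ⊓
          (Submodule.span (ZMod 2) (iasCol A '' Sᶜ)) : Submodule (ZMod 2) (V → ZMod 2)) := by
  rw [iasLambda, rank_univ, rank_sum_eq]
  omega

end StmtAux
section StmtAux2
set_option linter.unusedSectionVars false
set_option linter.unusedVariables false
set_option maxHeartbeats 1000000

variable {V : Type*} [Fintype V] [DecidableEq V]

private lemma symm_apply {A : Matrix V V (ZMod 2)} (hA : A.IsSymm) (a b : V) :
    A a b = A b a := by
  conv_lhs => rw [← hA]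
  rw [Matrix.transpose_apply]

private lemma exists_nbr (A : Matrix V V (ZMod 2))
    (hconn : (toSimpleGraph A).Connected) (hn : 1 < Fintype.card V) (v : V) :
    ∃ u, u ≠ v ∧ A v u = 1 ∧ A u v = 1 := by
  obtain ⟨w, hw⟩ := Fintype.exists_ne_of_one_lt_card hn v
  obtain ⟨P⟩ := hconn.preconnected v w
  cases P with
  | nil => exact absurd rfl hw
  | cons h P' =>
    obtain ⟨h1, h2, h3⟩ := h
    exact ⟨_, Ne.symm h1, h2, h3⟩

private lemma exists_cross (A : Matrix V V (ZMod 2))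
    (hconn : (toSimpleGraph A).Connected) {T : Set V}
    (h1 : T.Nonempty) (h2 : Tᶜ.Nonempty) :
    ∃ t u, t ∈ T ∧ u ∉ T ∧ A t u = 1 ∧ A u t = 1 := by
  obtain ⟨t0, ht0⟩ := h1
  obtain ⟨u0, hu0⟩ := h2
  obtain ⟨P⟩ := hconn.preconnected t0 u0
  obtain ⟨d, _, hd1, hd2⟩ := P.exists_boundary_dart T ht0 hu0
  obtain ⟨_, ha1, ha2⟩ := d.adj
  exact ⟨d.fst, d.snd, hd1, hd2, ha1, ha2⟩

private lemma col_ne_zero (A : Matrix V V (ZMod 2))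
    (hnb : ∀ v, ∃ u, u ≠ v ∧ A v u = 1 ∧ A u v = 1) (p : V × Fin 3) :
    iasCol A p ≠ 0 := by
  obtain ⟨v, i⟩ := p
  obtain ⟨u, huv, h1, h2⟩ := hnb v
  fin_cases i <;> intro h
  · have := congrFun h v
    simp [iasCol] at this
  · have := congrFun h u
    simp only [iasCol] at this
    rw [h2] at this
    exact one_ne_zero this
  · have := congrFun h u
    simp only [iasCol] at this
    rw [if_neg huv, add_zero, h2] at this
    exact one_ne_zero this

private lemma cols_mem_of_two (A : Matrix V V (ZMod 2)) {v : V} {i : Fin 3}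
    {X : Set (V × Fin 3)} (h : ∀ j, j ≠ i → (v, j) ∈ X) (l : Fin 3) :
    iasCol A (v, l) ∈ Submodule.span (ZMod 2) (iasCol A '' X) := by
  by_cases hl : l = i
  · subst hl
    have others : ∀ i : Fin 3, ∃ a b : Fin 3, a ≠ b ∧ a ≠ i ∧ b ≠ i := by decide
    obtain ⟨a, b, hab, hai, hbi⟩ := others l
    rw [← col_add A v hab hai hbi]
    exact add_mem (Submodule.subset_span ⟨(v, a), h a hai, rfl⟩)
      (Submodule.subset_span ⟨(v, b), h b hbi, rfl⟩)
  · exact Submodule.subset_span ⟨(v, l), h l hl, rfl⟩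
end StmtAux2
section StmtAux3
set_option linter.unusedSectionVars false
set_option linter.unusedVariables false
set_option maxHeartbeats 1000000

variable {V : Type*} [Fintype V] [DecidableEq V]

private lemma indep_small (A : Matrix V V (ZMod 2)) {S : Set (V × Fin 3)}
    (h1 : S.ncard ≤ 1) (hnz : ∀ p, iasCol A p ≠ 0) : iasIndep A S := by
  rcases (Set.ncard_le_one_iff_eq (Set.toFinite S)).mp h1 with rfl | ⟨a, rfl⟩
  · have : IsEmpty (↥(∅ : Set (V × Fin 3))) := by
      simp
    exact linearIndependent_empty_type
  · haveI := Set.uniqueSingleton a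
    refine linearIndependent_unique_iff.mpr ?_
    have hd : ((default : ↥({a} : Set (V × Fin 3))) : V × Fin 3) = a :=
      (default : ↥({a} : Set (V × Fin 3))).2
    rw [hd]
    exact hnz a

private lemma indep_ncard_le (A : Matrix V V (ZMod 2)) {S : Set (V × Fin 3)}
    (h : iasIndep A S) : S.ncard ≤ Fintype.card V := by
  classical
  haveI : Fintype ↥S := (Set.toFinite S).fintype
  have := h.fintype_card_le_finrank
  rw [Module.finrank_fintype_fun_eq_card] at this
  rwa [Set.ncard_eq_toFinset_card', Set.toFinset_card]

private lemma pair_indep (A : Matrix V V (ZMod 2)) {p q : V × Fin 3} (hne : p ≠ q)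
    (hp : iasCol A p ≠ 0) (hq : iasCol A q ≠ 0) (hcol : iasCol A p ≠ iasCol A q) :
    iasIndep A {p, q} := by
  classical
  have hpair : LinearIndependent (ZMod 2) ![iasCol A p, iasCol A q] := by
    rw [linearIndependent_fin2]
    constructor
    · simpa using hq
    · intro a
      rcases zmod2_cases a with h | h <;> subst h
      · simpa using fun h' => hp h'.symm
      · intro hc
        simp only [one_smul] at hc
        exact hcol (by simpa using hc.symm)
  let f : ({p, q} : Set (V × Fin 3)) → Fin 2 := fun s => if s.1 = p then 0 else 1
  have hfinj : Function.Injective f := by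
    rintro ⟨x, hx⟩ ⟨y, hy⟩ hxy
    have hx' : x = p ∨ x = q := hx
    have hy' : y = p ∨ y = q := hy
    apply Subtype.ext
    simp only [f] at hxy
    rcases hx' with rfl | rfl <;> rcases hy' with rfl | rfl
    · rfl
    · rw [if_pos rfl, if_neg (Ne.symm hne)] at hxy
      exact absurd hxy (by decide)
    · rw [if_neg (Ne.symm hne), if_pos rfl] at hxy
      exact absurd hxy (by decide)
    · rfl
  have heq : (fun s : ({p, q} : Set (V × Fin 3)) => iasCol A s.1)
      = ![iasCol A p, iasCol A q] ∘ f := by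
    funext s
    rcases s with ⟨x, hx⟩
    have hx' : x = p ∨ x = q := hx
    rcases hx' with rfl | rfl
    · simp [f]
    · have hqp : x ≠ p := Ne.symm hne
      simp [f, hqp]
  rw [iasIndep, heq]
  exact hpair.comp f hfinj

private lemma pair_circuit (A : Matrix V V (ZMod 2)) {p q : V × Fin 3} (hne : p ≠ q)
    (heq : iasCol A p = iasCol A q) (hnz : ∀ r, iasCol A r ≠ 0) :
    iasCircuit A {p, q} ∧ ({p, q} : Set (V × Fin 3)).ncard = 2 := by
  refine ⟨⟨?_, ?_⟩, Set.ncard_pair hne⟩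
  · intro hind
    have hinj := hind.injective
    have h1 : (⟨p, by simp⟩ : ({p, q} : Set (V × Fin 3))) = ⟨q, by simp⟩ := by
      apply hinj
      simpa using heq
    exact hne (congrArg Subtype.val h1)
  · intro S hS
    have hcard : S.ncard ≤ 1 := by
      have h2 := Set.ncard_lt_ncard hS (Set.toFinite _)
      rw [Set.ncard_pair hne] at h2
      omega
    exact indep_small A hcard hnz

private lemma circuit_two_extract (A : Matrix V V (ZMod 2)) {C : Set (V × Fin 3)}
    (hC : iasCircuit A C) (h2 : C.ncard = 2) (hnz : ∀ r, iasCol A r ≠ 0) :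
    ∃ p q, p ≠ q ∧ iasCol A p = iasCol A q := by
  obtain ⟨p, q, hne, rfl⟩ := Set.ncard_eq_two.mp h2
  refine ⟨p, q, hne, ?_⟩
  by_contra hcol
  exact hC.1 (pair_indep A hne (hnz p) (hnz q) hcol)

end StmtAux3
section StmtAux4
set_option linter.unusedSectionVars false
set_option linter.unusedVariables false
set_option maxHeartbeats 1000000

variable {V : Type*} [Fintype V] [DecidableEq V]

private lemma pendant_of (A : Matrix V V (ZMod 2)) (hA : A.IsSymm) {v w : V}
    (hvw : v ≠ w) {j : Fin 3} (hj : j ≠ 0)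
    (heq : iasCol A (v, 0) = iasCol A (w, j)) : IsPendant A w := by
  refine ⟨v, ?_⟩
  have hvw1 : A w v = 1 := by
    have hv := congrFun heq v
    rcases fin3_ne0 j hj with rfl | rfl
    · rw [col_apply0, col_apply1, if_pos rfl] at hv
      rw [← symm_apply hA, ← hv]
    · rw [col_apply0, col_apply2, if_pos rfl, if_neg hvw, add_zero] at hv
      rw [← symm_apply hA, ← hv]
  ext u
  simp only [nbhd, Set.mem_setOf_eq, Set.mem_singleton_iff]
  constructor
  · rintro ⟨huw, hAwu⟩
    have hu := congrFun heq u
    by_contra huv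
    rcases fin3_ne0 j hj with rfl | rfl
    · rw [col_apply0, col_apply1, if_neg huv] at hu
      rw [symm_apply hA w u, ← hu] at hAwu
      exact absurd hAwu (by decide)
    · rw [col_apply0, col_apply2, if_neg huv, if_neg huw, add_zero] at hu
      rw [symm_apply hA w u, ← hu] at hAwu
      exact absurd hAwu (by decide)
  · rintro rfl
    exact ⟨hvw, hvw1⟩

private lemma twins_of (A : Matrix V V (ZMod 2)) (hA : A.IsSymm) {v w : V}
    (hvw : v ≠ w) {i j : Fin 3} (hi : i ≠ 0) (hj : j ≠ 0)
    (heq : iasCol A (v, i) = iasCol A (w, j)) : HasTwins A := by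
  have hoff : ∀ u, u ≠ v → u ≠ w → A v u = A w u := by
    intro u huv huw
    have hu := congrFun heq u
    have hl : iasCol A (v, i) u = A u v := by
      rcases fin3_ne0 i hi with rfl | rfl
      · rw [col_apply1]
      · rw [col_apply2, if_neg huv, add_zero]
    have hr : iasCol A (w, j) u = A u w := by
      rcases fin3_ne0 j hj with rfl | rfl
      · rw [col_apply1]
      · rw [col_apply2, if_neg huw, add_zero]
    rw [hl, hr] at hu
    rw [symm_apply hA v u, symm_apply hA w u, hu]
  refine ⟨v, w, hvw, ?_⟩
  ext u
  simp only [Set.mem_diff, nbhd, Set.mem_setOf_eq, Set.mem_singleton_iff]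
  constructor
  · rintro ⟨⟨huv, hA1⟩, huw⟩
    exact ⟨⟨huw, by rw [← hoff u huv huw]; exact hA1⟩, huv⟩
  · rintro ⟨⟨huw, hA1⟩, huv⟩
    exact ⟨⟨huv, by rw [hoff u huv huw]; exact hA1⟩, huw⟩

private lemma eq_cols_pt (A : Matrix V V (ZMod 2)) (hA : A.IsSymm)
    (hnb : ∀ v, ∃ u, u ≠ v ∧ A v u = 1 ∧ A u v = 1) {p q : V × Fin 3}
    (hpq : p ≠ q) (heq : iasCol A p = iasCol A q) :
    (∃ v, IsPendant A v) ∨ HasTwins A := by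
  obtain ⟨v, i⟩ := p
  obtain ⟨w, j⟩ := q
  by_cases hvw : v = w
  · subst hvw
    exfalso
    have hij : i ≠ j := fun h => hpq (by rw [h])
    obtain ⟨u, huv, h1, h2⟩ := hnb v
    rcases fin3_cases i with rfl | rfl | rfl <;> rcases fin3_cases j with rfl | rfl | rfl
    · exact hij rfl
    · have hu := congrFun heq u
      rw [col_apply0, col_apply1, if_neg huv, h2] at hu
      exact absurd hu (by decide)
    · have hu := congrFun heq u
      rw [col_apply0, col_apply2, if_neg huv, h2, add_zero] at hu
      exact absurd hu (by decide)
    · have hu := congrFun heq u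
      rw [col_apply0, col_apply1, if_neg huv, h2] at hu
      exact absurd hu (by decide)
    · exact hij rfl
    · have hv := congrFun heq v
      rw [col_apply1, col_apply2, if_pos rfl] at hv
      rcases zmod2_cases (A v v) with h | h <;> rw [h] at hv <;> exact absurd hv (by decide)
    · have hu := congrFun heq u
      rw [col_apply0, col_apply2, if_neg huv, h2, add_zero] at hu
      exact absurd hu (by decide)
    · have hv := congrFun heq v
      rw [col_apply1, col_apply2, if_pos rfl] at hv
      rcases zmod2_cases (A v v) with h | h <;> rw [h] at hv <;> exact absurd hv (by decide)
    · exact hij rfl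
  · by_cases hi : i = 0
    · by_cases hj : j = 0
      · exfalso
        subst hi hj
        have hv := congrFun heq v
        rw [col_apply0, col_apply0, if_pos rfl, if_neg hvw] at hv
        exact one_ne_zero hv
      · subst hi
        exact Or.inl ⟨w, pendant_of A hA hvw hj heq⟩
    · by_cases hj : j = 0
      · subst hj
        exact Or.inl ⟨v, pendant_of A hA (Ne.symm hvw) hi heq.symm⟩
      · exact Or.inr (twins_of A hA hvw hi hj heq)

end StmtAux4
section StmtAux5
set_option linter.unusedSectionVars false
set_option linter.unusedVariables false
set_option maxHeartbeats 1000000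

variable {V : Type*} [Fintype V] [DecidableEq V]

private lemma pendant_to_eq (A : Matrix V V (ZMod 2)) (hA : A.IsSymm) {v : V}
    (hp : IsPendant A v) : ∃ p q : V × Fin 3, p ≠ q ∧ iasCol A p = iasCol A q := by
  obtain ⟨w, hw⟩ := hp
  have hwmem : w ∈ nbhd A v := by rw [hw]; rfl
  obtain ⟨hwv, hAvw⟩ := hwmem
  have hAwv : A w v = 1 := by rw [symm_apply hA w v]; exact hAvw
  have hmem : ∀ u, (u ≠ v ∧ A v u = 1) ↔ u = w := by
    intro u
    constructor
    · intro h
      have h2 : u ∈ nbhd A v := h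
      rw [hw] at h2
      exact h2
    · rintro rfl
      exact ⟨hwv, hAvw⟩
  have hoffv : ∀ u, u ≠ v → u ≠ w → A u v = 0 := by
    intro u huv huw
    rcases zmod2_cases (A u v) with h | h
    · exact h
    · have h1 : A v u = 1 := by rw [symm_apply hA v u]; exact h
      exact absurd ((hmem u).mp ⟨huv, h1⟩) huw
  rcases zmod2_cases (A v v) with hl | hl
  · refine ⟨(v, 1), (w, 0), ?_, ?_⟩
    · intro h
      exact (by decide : ((1 : Fin 3) = 0) → False) (congrArg Prod.snd h)
    · funext u
      rw [col_apply1, col_apply0]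
      by_cases huv : u = v
      · subst huv
        rw [hl, if_neg (Ne.symm hwv)]
      · by_cases huw : u = w
        · subst huw
          rw [hAwv, if_pos rfl]
        · rw [hoffv u huv huw, if_neg huw]
  · refine ⟨(v, 2), (w, 0), ?_, ?_⟩
    · intro h
      exact (by decide : ((2 : Fin 3) = 0) → False) (congrArg Prod.snd h)
    · funext u
      rw [col_apply2, col_apply0]
      by_cases huv : u = v
      · subst huv
        rw [hl, if_pos rfl, if_neg (Ne.symm hwv)]
        decide
      · rw [if_neg huv, add_zero]
        by_cases huw : u = w
        · subst huw
          rw [hAwv, if_pos rfl]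
        · rw [hoffv u huv huw, if_neg huw]

private lemma twins_to_eq (A : Matrix V V (ZMod 2)) (hA : A.IsSymm)
    (ht : HasTwins A) : ∃ p q : V × Fin 3, p ≠ q ∧ iasCol A p = iasCol A q := by
  obtain ⟨v, w, hvw, hset⟩ := ht
  have hoff : ∀ u, u ≠ v → u ≠ w → A u v = A u w := by
    intro u huv huw
    have h1 : (u ∈ nbhd A v \ {w}) ↔ (u ∈ nbhd A w \ {v}) := by rw [hset]
    simp only [Set.mem_diff, nbhd, Set.mem_setOf_eq, Set.mem_singleton_iff] at h1
    have h2 : A v u = 1 ↔ A w u = 1 := by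
      constructor
      · intro h
        exact ((h1.mp ⟨⟨huv, h⟩, huw⟩).1).2
      · intro h
        exact ((h1.mpr ⟨⟨huw, h⟩, huv⟩).1).2
    rw [symm_apply hA u v, symm_apply hA u w]
    rcases zmod2_cases (A v u) with h | h <;> rcases zmod2_cases (A w u) with h' | h' <;>
        rw [h, h']
    · exfalso
      have h3 := h2.mpr h'
      rw [h] at h3
      exact absurd h3 (by decide)
    · exfalso
      have h3 := h2.mp h
      rw [h'] at h3
      exact absurd h3 (by decide)
  set a := A v w with ha
  have haw : A w v = a := by rw [symm_apply hA w v]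
  have key : ∀ (z u : V), iasCol A (z, if A z z = a then 1 else 2) u
      = A u z + (A z z + a) * (if u = z then 1 else 0) := by
    intro z u
    by_cases h : A z z = a
    · rw [if_pos h, col_apply1, h]
      have h0 : a + a = (0 : ZMod 2) := by
        rcases zmod2_cases a with h' | h' <;> rw [h'] <;> decide
      rw [h0, zero_mul, add_zero]
    · rw [if_neg h, col_apply2]
      have h1 : A z z + a = 1 := by
        rcases zmod2_cases (A z z) with h' | h' <;> rcases zmod2_cases a with h'' | h'' <;>
            rw [h', h''] at h ⊢ <;> first | decide | exact absurd rfl h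
      rw [h1, one_mul]
  refine ⟨(v, if A v v = a then 1 else 2), (w, if A w w = a then 1 else 2), ?_, ?_⟩
  · intro h
    rw [Prod.ext_iff] at h
    exact hvw h.1
  · funext u
    rw [key v u, key w u]
    by_cases huv : u = v
    · subst huv
      rw [if_pos rfl, if_neg hvw, mul_one, mul_zero, add_zero]
      rw [← ha]
      rcases zmod2_cases (A u u) with h | h <;> rcases zmod2_cases a with h' | h' <;>
          rw [h, h'] <;> decide
    · by_cases huw : u = w
      · subst huw
        rw [if_neg huv, if_pos rfl, mul_zero, add_zero, mul_one, haw]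
        rcases zmod2_cases (A u u) with h | h <;> rcases zmod2_cases a with h' | h' <;>
            rw [h, h'] <;> decide
      · rw [if_neg huv, if_neg huw, mul_zero, add_zero, mul_zero, add_zero]
        exact hoff u huv huw

private lemma eq_of_mem_finrank_le_one {D : Submodule (ZMod 2) (V → ZMod 2)}
    (hD : Module.finrank (ZMod 2) D ≤ 1) {x y : V → ZMod 2}
    (hx : x ∈ D) (hy : y ∈ D) (hx0 : x ≠ 0) (hy0 : y ≠ 0) : x = y := by
  by_contra hxy
  have hpair : LinearIndependent (ZMod 2) ![x, y] := by
    rw [linearIndependent_fin2]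
    refine ⟨by simpa using hy0, ?_⟩
    intro a
    rcases zmod2_cases a with h | h <;> subst h
    · simpa using fun h' => hx0 h'.symm
    · intro hc
      simp only [one_smul] at hc
      exact hxy (by simpa using hc.symm)
  have hle : Submodule.span (ZMod 2) (Set.range ![x, y]) ≤ D := by
    rw [Submodule.span_le]
    rintro z ⟨i, rfl⟩
    fin_cases i
    · exact hx
    · exact hy
  have h2 := finrank_span_eq_card hpair
  have h3 := Submodule.finrank_mono hle
  rw [h2] at h3
  simp only [Fintype.card_fin] at h3
  omega

end StmtAux5
section StmtAux6
set_option linter.unusedSectionVars false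
set_option linter.unusedVariables false
set_option maxHeartbeats 1000000

variable {V : Type*} [Fintype V] [DecidableEq V]

private lemma caseB1_half (A : Matrix V V (ZMod 2)) (hA : A.IsSymm)
    (hconn : (toSimpleGraph A).Connected) (hn : 1 < Fintype.card V)
    {S : Set (V × Fin 3)} {v : V} {i : Fin 3}
    (hbound : iasRank A S + iasRank A Sᶜ ≤ Fintype.card V + 1)
    (hone : S.ncard = 1 → iasRank A S + iasRank A Sᶜ ≤ Fintype.card V)
    (hlonein : (v, i) ∈ S) (hlately : ∀ j, j ≠ i → (v, j) ∉ S)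
    (hcover : ∀ x, x ≠ v → (∀ l, (x, l) ∈ S) ∨ (∀ l, (x, l) ∉ S)) : False := by
  classical
  set n := Fintype.card V with hndef
  let T : Set V := {t | t ≠ v ∧ ∀ l, (t, l) ∈ S}
  let T' : Set V := {t | t ≠ v ∧ ∀ l, (t, l) ∉ S}
  have hvT : v ∉ T := fun h => h.1 rfl
  have hvT' : v ∉ T' := fun h => h.1 rfl
  have hTT' : ∀ x, x ∉ T → x ≠ v → x ∈ T' := by
    intro x hx hxv
    rcases hcover x hxv with h | h
    · exact absurd (⟨hxv, h⟩ : x ∈ T) hx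
    · exact ⟨hxv, h⟩
  have hdisj : ∀ x, x ∈ T → x ∉ T' := by
    intro x hx hx'
    exact (hx'.2 0) (hx.2 0)
  have hvS : ∀ j, j ≠ i → (v, j) ∈ Sᶜ := fun j hj => hlately j hj
  have hAvU' : ∀ l, iasCol A (v, l) ∈ Submodule.span (ZMod 2) (iasCol A '' Sᶜ) :=
    cols_mem_of_two A hvS
  by_cases hT : T.Nonempty
  · have hTc : Tᶜ.Nonempty := ⟨v, hvT⟩
    obtain ⟨t, s, htT, hsT, hts1, hts2⟩ := exists_cross A hconn hT hTc
    have hb1 : T.ncard + 1 ≤ iasRank A S := by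
      show T.ncard + 1 ≤ Module.finrank (ZMod 2) (Submodule.span (ZMod 2) (iasCol A '' S))
      refine finrank_lb _ T ?_ (iasCol A (t, 1)) ?_ s hsT ?_
      · intro t' ht'
        rw [← col0_eV A t']
        exact Submodule.subset_span ⟨(t', 0), ht'.2 0, rfl⟩
      · exact Submodule.subset_span ⟨(t, 1), htT.2 1, rfl⟩
      · rw [col_apply1, hts2]
        decide
    have hb2 : (T' ∪ {v}).ncard + 1 ≤ iasRank A Sᶜ := by
      show (T' ∪ {v}).ncard + 1 ≤
        Module.finrank (ZMod 2) (Submodule.span (ZMod 2) (iasCol A '' Sᶜ))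
      refine finrank_lb _ (T' ∪ {v}) ?_ (iasCol A (s, 1)) ?_ t ?_ ?_
      · rintro t' (ht' | ht')
        · rw [← col0_eV A t']
          exact Submodule.subset_span ⟨(t', 0), ht'.2 0, rfl⟩
        · rw [Set.mem_singleton_iff] at ht'
          subst ht'
          rw [← col0_eV A t']
          exact hAvU' 0
      · by_cases hsv : s = v
        · subst hsv
          exact hAvU' 1
        · exact Submodule.subset_span ⟨(s, 1), (hTT' s hsT hsv).2 1, rfl⟩
      · rintro (ht | ht)
        · exact hdisj t htT ht
        · rw [Set.mem_singleton_iff] at ht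
          subst ht
          exact hvT htT
      · rw [col_apply1, hts1]
        decide
    have hc1 : (T ∪ {v}).ncard = T.ncard + 1 := by
      rw [Set.union_singleton, Set.ncard_insert_of_notMem hvT (Set.toFinite T)]
    have hc2 : (T' ∪ {v}).ncard = T'.ncard + 1 := by
      rw [Set.union_singleton, Set.ncard_insert_of_notMem hvT' (Set.toFinite T')]
    have hT'c : T' = (T ∪ {v})ᶜ := by
      ext x
      simp only [Set.mem_compl_iff, Set.mem_union, Set.mem_singleton_iff]
      constructor
      · intro hx
        rintro (h | h)
        · exact (hx.2 0) (h.2 0)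
        · exact hx.1 h
      · intro hx
        exact hTT' x (fun h => hx (Or.inl h)) (fun h => hx (Or.inr h))
    have hcs : (T ∪ {v}).ncard + T'.ncard = n := by
      rw [hT'c, hndef, ← Nat.card_eq_fintype_card]
      exact Set.ncard_add_ncard_compl _
    omega
  · have hS1 : S = {(v, i)} := by
      apply Set.eq_singleton_iff_unique_mem.mpr
      refine ⟨hlonein, ?_⟩
      rintro ⟨x, l⟩ hx
      by_cases hxv : x = v
      · subst hxv
        by_cases hli : l = i
        · rw [hli]
        · exact absurd hx (hlately l hli)
      · rcases hcover x hxv with h | h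
        · exact absurd (⟨hxv, h⟩ : x ∈ T) (fun hc => hT ⟨x, hc⟩)
        · exact absurd hx (h l)
    have hcard1 : S.ncard = 1 := by
      rw [hS1]
      exact Set.ncard_singleton _
    have hb := hone hcard1
    have hnb := exists_nbr A hconn hn
    have hb1 : 1 ≤ iasRank A S := by
      by_contra h
      push_neg at h
      have h0 : iasRank A S = 0 := by omega
      have hbot : Submodule.span (ZMod 2) (iasCol A '' S) = ⊥ :=
        Submodule.finrank_eq_zero.mp h0
      have hmem : iasCol A (v, i) ∈ Submodule.span (ZMod 2) (iasCol A '' S) :=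
        Submodule.subset_span ⟨(v, i), hlonein, rfl⟩
      rw [hbot, Submodule.mem_bot] at hmem
      exact col_ne_zero A hnb (v, i) hmem
    have hb2 : iasRank A Sᶜ = n := by
      have htop : Submodule.span (ZMod 2) (iasCol A '' Sᶜ) = ⊤ := by
        apply span_top_of_e
        intro w
        by_cases hwv : w = v
        · subst hwv
          rw [← col0_eV A w]
          exact hAvU' 0
        · rw [← col0_eV A w]
          refine Submodule.subset_span ⟨(w, 0), ?_, rfl⟩
          exact (hTT' w (fun hc => hT ⟨w, hc⟩) hwv).2 0
      show Module.finrank (ZMod 2) (Submodule.span (ZMod 2) (iasCol A '' Sᶜ)) = n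
      rw [htop, finrank_top, Module.finrank_fintype_fun_eq_card]
    omega

end StmtAux6
section StmtAux7
set_option linter.unusedSectionVars false
set_option linter.unusedVariables false
set_option maxHeartbeats 1000000

variable {V : Type*} [Fintype V] [DecidableEq V]

private lemma sep_gives_circuit (A : Matrix V V (ZMod 2)) (hA : A.IsSymm)
    (hconn : (toSimpleGraph A).Connected) (hn : 1 < Fintype.card V)
    {m : ℕ} {S : Set (V × Fin 3)} (hsep : OrdinarySep A m S) (hm : m ≤ 2) :
    ∃ p q : V × Fin 3, p ≠ q ∧ iasCol A p = iasCol A q ∧ iasCol A p ≠ 0 := by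
  classical
  obtain ⟨hm0, hlam, hcS, hcSc⟩ := hsep
  set n := Fintype.card V with hndef
  have hnb := exists_nbr A hconn hn
  have hnz := col_ne_zero A hnb
  have hlam2 := lambda_eq A S
  have hrsum := rank_sum_eq A S
  set d := Module.finrank (ZMod 2)
    ((Submodule.span (ZMod 2) (iasCol A '' S)) ⊓
      (Submodule.span (ZMod 2) (iasCol A '' Sᶜ)) : Submodule (ZMod 2) (V → ZMod 2)) with hddef
  have hdm : d < m := by rw [hlam2] at hlam; exact hlam
  have hD1 : d ≤ 1 := by omega
  have hbound : iasRank A S + iasRank A Sᶜ ≤ n + 1 := by omega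
  have honeS : S.ncard = 1 → iasRank A S + iasRank A Sᶜ ≤ n := by
    intro h
    rw [h] at hcS
    omega
  have honeSc : Sᶜ.ncard = 1 → iasRank A S + iasRank A Sᶜ ≤ n := by
    intro h
    rw [h] at hcSc
    omega
  let Sp : V → Prop := fun x => (∃ l, (x, l) ∈ S) ∧ (∃ l, (x, l) ∉ S)
  have hlone : ∀ x, Sp x → ∃ l : Fin 3,
      ((x, l) ∈ S ∧ ∀ j, j ≠ l → (x, j) ∉ S) ∨
      ((x, l) ∉ S ∧ ∀ j, j ≠ l → (x, j) ∈ S) := by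
    rintro x ⟨⟨l1, hl1⟩, ⟨l2, hl2⟩⟩
    by_cases h0 : (x, 0) ∈ S <;> by_cases h1 : (x, 1) ∈ S <;> by_cases h2 : (x, 2) ∈ S
    · exfalso
      rcases fin3_cases l2 with rfl | rfl | rfl
      exacts [hl2 h0, hl2 h1, hl2 h2]
    · refine ⟨2, Or.inr ⟨h2, ?_⟩⟩
      intro j hj
      rcases fin3_cases j with rfl | rfl | rfl
      exacts [h0, h1, absurd rfl hj]
    · refine ⟨1, Or.inr ⟨h1, ?_⟩⟩
      intro j hj
      rcases fin3_cases j with rfl | rfl | rfl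
      exacts [h0, absurd rfl hj, h2]
    · refine ⟨0, Or.inl ⟨h0, ?_⟩⟩
      intro j hj
      rcases fin3_cases j with rfl | rfl | rfl
      exacts [absurd rfl hj, h1, h2]
    · refine ⟨0, Or.inr ⟨h0, ?_⟩⟩
      intro j hj
      rcases fin3_cases j with rfl | rfl | rfl
      exacts [absurd rfl hj, h1, h2]
    · refine ⟨1, Or.inl ⟨h1, ?_⟩⟩
      intro j hj
      rcases fin3_cases j with rfl | rfl | rfl
      exacts [h0, absurd rfl hj, h2]
    · refine ⟨2, Or.inl ⟨h2, ?_⟩⟩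
      intro j hj
      rcases fin3_cases j with rfl | rfl | rfl
      exacts [h0, h1, absurd rfl hj]
    · exfalso
      rcases fin3_cases l1 with rfl | rfl | rfl
      exacts [h0 hl1, h1 hl1, h2 hl1]
  have hloneD : ∀ x, Sp x → ∃ l : Fin 3, iasCol A (x, l) ∈
      ((Submodule.span (ZMod 2) (iasCol A '' S)) ⊓
        (Submodule.span (ZMod 2) (iasCol A '' Sᶜ)) : Submodule (ZMod 2) (V → ZMod 2)) := by
    intro x hx
    obtain ⟨l, hcase⟩ := hlone x hx
    refine ⟨l, ?_⟩
    rcases hcase with ⟨hin, hout⟩ | ⟨hout, hin⟩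
    · exact Submodule.mem_inf.mpr ⟨Submodule.subset_span ⟨(x, l), hin, rfl⟩,
        cols_mem_of_two A (fun j hj => hout j hj) l⟩
    · exact Submodule.mem_inf.mpr ⟨cols_mem_of_two A (fun j hj => hin j hj) l,
        Submodule.subset_span ⟨(x, l), hout, rfl⟩⟩
  by_cases htwo : ∃ x y, x ≠ y ∧ Sp x ∧ Sp y
  · obtain ⟨x, y, hxy, hx, hy⟩ := htwo
    obtain ⟨lx, hlx⟩ := hloneD x hx
    obtain ⟨ly, hly⟩ := hloneD y hy
    have heqz := eq_of_mem_finrank_le_one hD1 hlx hly (hnz _) (hnz _)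
    exact ⟨(x, lx), (y, ly), fun h => hxy (congrArg Prod.fst h), heqz, hnz _⟩
  · exfalso
    by_cases hsp : ∃ x, Sp x
    · obtain ⟨v, hv⟩ := hsp
      have huniq : ∀ x, Sp x → x = v := by
        intro x hx
        by_contra hxv
        exact htwo ⟨x, v, hxv, hx, hv⟩
      have hcover : ∀ x, x ≠ v → (∀ l, (x, l) ∈ S) ∨ (∀ l, (x, l) ∉ S) := by
        intro x hxv
        by_cases hfirst : ∀ l, (x, l) ∈ S
        · exact Or.inl hfirst
        · push_neg at hfirst
          obtain ⟨l0, hl0⟩ := hfirst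
          right
          intro l
          by_contra hl
          exact hxv (huniq x ⟨⟨l, hl⟩, ⟨l0, hl0⟩⟩)
      obtain ⟨l, hcase⟩ := hlone v hv
      rcases hcase with ⟨hin, hout⟩ | ⟨hout, hin⟩
      · exact caseB1_half A hA hconn hn hbound honeS hin hout hcover
      · refine caseB1_half A hA hconn hn (S := Sᶜ) (v := v) (i := l) ?_ ?_ hout ?_ ?_
        · rw [compl_compl]
          omega
        · intro h
          rw [compl_compl]
          rw [add_comm]
          exact honeSc h
        · intro j hj hc
          exact hc (hin j hj)
        · intro x hxv
          rcases hcover x hxv with h | h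
          · exact Or.inr (fun l hc => hc (h l))
          · exact Or.inl (fun l => h l)
    · have hcover : ∀ x, (∀ l, (x, l) ∈ S) ∨ (∀ l, (x, l) ∉ S) := by
        intro x
        by_cases hfirst : ∀ l, (x, l) ∈ S
        · exact Or.inl hfirst
        · push_neg at hfirst
          obtain ⟨l0, hl0⟩ := hfirst
          right
          intro l
          by_contra hl
          exact hsp ⟨x, ⟨l, hl⟩, ⟨l0, hl0⟩⟩
      set T : Set V := {t | ∀ l, (t, l) ∈ S} with hTdef
      have hTc : ∀ x, x ∉ T → ∀ l, (x, l) ∉ S := fun x hx => (hcover x).resolve_left hx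
      have hTne : T.Nonempty := by
        have hSne : S.Nonempty := Set.nonempty_of_ncard_ne_zero (by omega)
        obtain ⟨⟨x, l⟩, hxl⟩ := hSne
        exact ⟨x, (hcover x).resolve_right (fun h => h l hxl)⟩
      have hTcne : Tᶜ.Nonempty := by
        have hScne : Sᶜ.Nonempty := Set.nonempty_of_ncard_ne_zero (by omega)
        obtain ⟨⟨x, l⟩, hxl⟩ := hScne
        exact ⟨x, fun hxT => hxl (hxT l)⟩
      obtain ⟨t, s, htT, hsT, hts1, hts2⟩ := exists_cross A hconn hTne hTcne
      have hb1 : T.ncard + 1 ≤ iasRank A S := by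
        show T.ncard + 1 ≤ Module.finrank (ZMod 2) (Submodule.span (ZMod 2) (iasCol A '' S))
        refine finrank_lb _ T ?_ (iasCol A (t, 1)) ?_ s hsT ?_
        · intro t' ht'
          rw [← col0_eV A t']
          exact Submodule.subset_span ⟨(t', 0), ht' 0, rfl⟩
        · exact Submodule.subset_span ⟨(t, 1), htT 1, rfl⟩
        · rw [col_apply1, hts2]
          decide
      have hb2 : Tᶜ.ncard + 1 ≤ iasRank A Sᶜ := by
        show Tᶜ.ncard + 1 ≤ Module.finrank (ZMod 2) (Submodule.span (ZMod 2) (iasCol A '' Sᶜ))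
        refine finrank_lb _ Tᶜ ?_ (iasCol A (s, 1)) ?_ t (not_not.mpr htT) ?_
        · intro t' ht'
          rw [← col0_eV A t']
          exact Submodule.subset_span ⟨(t', 0), hTc t' ht' 0, rfl⟩
        · exact Submodule.subset_span ⟨(s, 1), hTc s hsT 1, rfl⟩
        · rw [col_apply1, hts1]
          decide
      have hcsum : T.ncard + Tᶜ.ncard = n := by
        rw [hndef, ← Nat.card_eq_fintype_card]
        exact Set.ncard_add_ncard_compl _
      omega

end StmtAux7
set_option linter.unusedSectionVars false
set_option maxHeartbeats 1000000 in
theorem stmt2 (A : Matrix V V (ZMod 2)) (hA : A.IsSymm)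
    (hconn : (toSimpleGraph A).Connected) (hn : 1 < Fintype.card V) :
    List.TFAE [iasTau A ≤ 2, iasKappaStar A ≤ 2,
      ∃ C, iasCircuit A C ∧ C.ncard = 2,
      (∃ v, IsPendant A v) ∨ HasTwins A] := by
  classical
  have hnb := exists_nbr A hconn hn
  have hnz := col_ne_zero A hnb
  have hcard3 : ∀ C : Set (V × Fin 3), C.ncard + Cᶜ.ncard = 3 * Fintype.card V := by
    intro C
    have h := Set.ncard_add_ncard_compl C
    rw [Nat.card_eq_fintype_card, Fintype.card_prod, Fintype.card_fin] at h
    omega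
  tfae_have 1 → 3 := by
    intro h1
    have hex : ∃ m S, OrdinarySep A m S ∧ m ≤ 2 := by
      by_contra hc
      push_neg at hc
      have h3 : (3 : ℕ∞) ≤ iasTau A := by
        apply le_sInf
        rintro b ⟨m, rfl, S, hsep⟩
        have hm3 : 3 ≤ m := hc m S hsep
        exact_mod_cast hm3
      have hcontra := h3.trans h1
      norm_num at hcontra
    obtain ⟨m, S, hsep, hm⟩ := hex
    obtain ⟨p, q, hpq, heq, _⟩ := sep_gives_circuit A hA hconn hn hsep hm
    obtain ⟨hcirc, hcard⟩ := pair_circuit A hpq heq hnz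
    exact ⟨{p, q}, hcirc, hcard⟩
  tfae_have 3 → 4 := by
    rintro ⟨C, hC, h2⟩
    obtain ⟨p, q, hpq, heq⟩ := circuit_two_extract A hC h2 hnz
    exact eq_cols_pt A hA hnb hpq heq
  tfae_have 4 → 3 := by
    rintro (⟨v, hp⟩ | ht)
    · obtain ⟨p, q, hpq, heq⟩ := pendant_to_eq A hA hp
      obtain ⟨hcirc, hcard⟩ := pair_circuit A hpq heq hnz
      exact ⟨{p, q}, hcirc, hcard⟩
    · obtain ⟨p, q, hpq, heq⟩ := twins_to_eq A hA ht
      obtain ⟨hcirc, hcard⟩ := pair_circuit A hpq heq hnz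
      exact ⟨{p, q}, hcirc, hcard⟩
  tfae_have 3 → 2 := by
    rintro ⟨C, hC, h2⟩
    have hcyc : CyclicSep A 2 C := by
      refine ⟨by norm_num, ?_, hC.1, ?_⟩
      · -- iasLambda A C < 2
        obtain ⟨p, q, hpq, heqC⟩ := Set.ncard_eq_two.mp h2
        subst heqC
        have heq : iasCol A p = iasCol A q := by
          by_contra hcol
          exact hC.1 (pair_indep A hpq (hnz p) (hnz q) hcol)
        have himg : iasCol A '' {p, q} = {iasCol A p} := by
          rw [Set.image_pair, ← heq, Set.pair_eq_singleton]
        have hr1 : iasRank A {p, q} = 1 := by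
          show Module.finrank (ZMod 2)
            (Submodule.span (ZMod 2) (iasCol A '' {p, q})) = 1
          rw [himg]
          exact finrank_span_singleton (hnz p)
        have hr2 : iasRank A ({p, q} : Set (V × Fin 3))ᶜ ≤ Fintype.card V := by
          show Module.finrank (ZMod 2) _ ≤ Fintype.card V
          have := Submodule.finrank_le
            (Submodule.span (ZMod 2) (iasCol A '' ({p, q} : Set (V × Fin 3))ᶜ))
          rwa [Module.finrank_fintype_fun_eq_card] at this
        have hru := rank_univ A
        have hlam : iasLambda A {p, q} =
            iasRank A {p, q} + iasRank A ({p, q} : Set (V × Fin 3))ᶜ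
              - iasRank A Set.univ := rfl
        omega
      · -- Cᶜ dependent
        intro hind
        have hle := indep_ncard_le A hind
        have htot := hcard3 C
        omega
    have hmem : (2 : ℕ) ∈ ({k : ℕ | ∃ S, CyclicSep A k S} ∪
        {3 * Fintype.card V - iasRank A Set.univ}) := Or.inl ⟨C, hcyc⟩
    exact Nat.sInf_le hmem
  tfae_have 2 → 1 := by
    intro h2
    have hne : ({k : ℕ | ∃ S, CyclicSep A k S} ∪
        {3 * Fintype.card V - iasRank A Set.univ}).Nonempty := ⟨_, Or.inr rfl⟩
    have hmem : iasKappaStar A ∈ ({k : ℕ | ∃ S, CyclicSep A k S} ∪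
        {3 * Fintype.card V - iasRank A Set.univ}) := Nat.sInf_mem hne
    rcases hmem with ⟨S, hcyc⟩ | hmem
    · obtain ⟨hk0, hlam, hdS, hdSc⟩ := hcyc
      have hS2 : 2 ≤ S.ncard := by
        by_contra h
        push_neg at h
        exact hdS (indep_small A (by omega) hnz)
      have hSc2 : 2 ≤ Sᶜ.ncard := by
        by_contra h
        push_neg at h
        exact hdSc (indep_small A (by omega) hnz)
      have hsep : OrdinarySep A (iasKappaStar A) S :=
        ⟨hk0, hlam, le_trans h2 hS2, le_trans h2 hSc2⟩
      have hle : iasTau A ≤ (iasKappaStar A : ℕ∞) :=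
        sInf_le ⟨iasKappaStar A, rfl, S, hsep⟩
      exact hle.trans (by exact_mod_cast h2)
    · exfalso
      rw [Set.mem_singleton_iff] at hmem
      have hru := rank_univ A
      rw [hmem] at h2
      omega
  tfae_finish
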